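/- Let ρ ≥ 1, let {ψ̃_x}_{x ∈ X} be an orthonormal representation of degree ρ of the channel in a finite-dimensional complex inner product space, and let f be a unit vector in that space. Let n ≥ 1, let k : X → ℕ satisfy ∑_a k(a) = n, and let θ ∈ ℝ satisfy ∏_{a ∈ X} |⟨ψ̃_a, f⟩|^{2·k(a)} ≥ e^{−nθ}. Let M ≥ 2 and let c_1, …, c_M ∈ X^n be codewords each of composition k, and assume M·e^{−nθ} ≥ 1. Then max over pairs m ≠ m' of ∏_{i=1}^n ⟨ψ_{c_m(i)}, ψ_{c_{m'}(i)}⟩ is at least ((M·e^{−nθ} − 1)/(M − 1))^ρ. -/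

import Mathlib

open Finset Complex

lemma gram_pos {E : Type*} [NormedAddCommGroup E] [InnerProductSpace ℂ E]
    [FiniteDimensional ℂ E] {J : Type*} [Fintype J] {n : ℕ}
    (u : J → Fin n → E) (z : J → ℂ) :
    0 ≤ (∑ j, ∑ k, (starRingEnd ℂ) (z j) * z k * ∏ i, (inner ℂ (u j i) (u k i) : ℂ)).re := by
  classical
  set b := stdOrthonormalBasis ℂ E with hb
  set d := Module.finrank ℂ E
  set S : (Fin n → Fin d) → ℂ := fun t => ∑ j, z j * ∏ i, (inner ℂ (b (t i)) (u j i) : ℂ) with hS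
  set g : (Fin n → Fin d) → J → J → ℂ := fun t j k =>
    ((starRingEnd ℂ) (z j) * ∏ i, (inner ℂ (u j i) (b (t i)) : ℂ))
      * (z k * ∏ i, (inner ℂ (b (t i)) (u k i) : ℂ)) with hg
  have hjk : ∀ j k, (starRingEnd ℂ) (z j) * z k * ∏ i, (inner ℂ (u j i) (u k i) : ℂ)
      = ∑ t : Fin n → Fin d, g t j k := by
    intro j k
    have hinner : ∀ i, (inner ℂ (u j i) (u k i) : ℂ)
        = ∑ β : Fin d, (inner ℂ (u j i) (b β) : ℂ) * inner ℂ (b β) (u k i) :=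
      fun i => (b.sum_inner_mul_inner _ _).symm
    calc (starRingEnd ℂ) (z j) * z k * ∏ i, (inner ℂ (u j i) (u k i) : ℂ)
        = (starRingEnd ℂ) (z j) * z k *
            ∑ t : Fin n → Fin d, ∏ i, ((inner ℂ (u j i) (b (t i)) : ℂ) * inner ℂ (b (t i)) (u k i)) := by
          rw [Finset.prod_congr rfl fun i _ => hinner i]
          rw [Finset.prod_univ_sum]
          simp [Fintype.piFinset_univ]
      _ = ∑ t : Fin n → Fin d, g t j k := by
          rw [Finset.mul_sum]
          refine Finset.sum_congr rfl fun t _ => ?_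
          rw [Finset.prod_mul_distrib, hg]; ring
  have hrhs : ∀ t, ((Complex.normSq (S t) : ℝ) : ℂ) = ∑ j, ∑ k, g t j k := by
    intro t
    rw [← Complex.mul_conj (S t), mul_comm (S t)]
    rw [hS]
    simp only
    rw [map_sum, Finset.sum_mul_sum]
    refine Finset.sum_congr rfl fun j _ => Finset.sum_congr rfl fun k _ => ?_
    rw [map_mul, map_prod, hg]
    simp only [inner_conj_symm]
  have key : (∑ j, ∑ k, (starRingEnd ℂ) (z j) * z k * ∏ i, (inner ℂ (u j i) (u k i) : ℂ))
      = ∑ t : Fin n → Fin d, ((Complex.normSq (S t) : ℝ) : ℂ) := by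
    calc (∑ j, ∑ k, (starRingEnd ℂ) (z j) * z k * ∏ i, (inner ℂ (u j i) (u k i) : ℂ))
        = ∑ j, ∑ k, ∑ t : Fin n → Fin d, g t j k :=
          Finset.sum_congr rfl fun j _ => Finset.sum_congr rfl fun k _ => hjk j k
      _ = ∑ j, ∑ t : Fin n → Fin d, ∑ k, g t j k :=
          Finset.sum_congr rfl fun j _ => Finset.sum_comm
      _ = ∑ t : Fin n → Fin d, ∑ j, ∑ k, g t j k := Finset.sum_comm
      _ = ∑ t : Fin n → Fin d, ((Complex.normSq (S t) : ℝ) : ℂ) :=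
          Finset.sum_congr rfl fun t _ => (hrhs t).symm
  rw [key, Complex.re_sum]
  apply Finset.sum_nonneg
  intro t _
  simp [Complex.normSq_nonneg]



/-- Constant-composition umbrella bound: for codewords all of composition `k` and a
handle `f` with `∏_a |⟨ψt a, f⟩|^{2 k(a)} ≥ e^{−nθ}`, some pair `m ≠ m'` of codewords
has Bhattacharyya coefficient at least `((M e^{−nθ} − 1)/(M − 1))^ρ`. -/
theorem stmt3 {X Y : Type*} [Fintype X] [Fintype Y] [DecidableEq X]
    {E : Type*} [NormedAddCommGroup E] [InnerProductSpace ℂ E] [FiniteDimensional ℂ E]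
    (W : X → Y → ℝ) (hW0 : ∀ x y, 0 ≤ W x y) (hW1 : ∀ x, ∑ y, W x y = 1)
    (ρ : ℝ) (hρ : 1 ≤ ρ)
    (ψt : X → E) (hψt : ∀ x, ‖ψt x‖ = 1)
    (hrep : ∀ x x', x ≠ x' →
      ‖(inner ℂ (ψt x) (ψt x') : ℂ)‖ ≤ (∑ y, Real.sqrt (W x y * W x' y)) ^ (1 / ρ))
    (f : E) (hf : ‖f‖ = 1)
    (n : ℕ) (hn : 1 ≤ n) (k : X → ℕ) (hk : ∑ a, k a = n)
    (θ : ℝ) (hθ : Real.exp (-(n * θ)) ≤ ∏ a, ‖(inner ℂ (ψt a) f : ℂ)‖ ^ (2 * k a))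
    (M : ℕ) (hM : 2 ≤ M)
    (c : Fin M → Fin n → X)
    (hc : ∀ m a, (Finset.univ.filter fun i => c m i = a).card = k a)
    (hMe : 1 ≤ (M : ℝ) * Real.exp (-(n * θ))) :
    ∃ m m', m ≠ m' ∧
      (((M : ℝ) * Real.exp (-(n * θ)) - 1) / ((M : ℝ) - 1)) ^ ρ
        ≤ ∏ i, ∑ y, Real.sqrt (W (c m i) y * W (c m' i) y) := by
  classical
  by_contra hcon
  push_neg at hcon
  set ε := Real.exp (-(n * θ)) with hεdef
  have hε0 : 0 < ε := Real.exp_pos _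
  have hρ0 : (0:ℝ) < ρ := lt_of_lt_of_le one_pos hρ
  have hρne : ρ ≠ 0 := ne_of_gt hρ0
  have hM1 : (1:ℝ) < (M:ℝ) := by
    have : (2:ℝ) ≤ (M:ℝ) := by exact_mod_cast hM
    linarith
  set β := ((M:ℝ) * ε - 1) / ((M:ℝ) - 1) with hβdef
  have hβ0 : 0 ≤ β := div_nonneg (by linarith) (by linarith)
  set B : X → X → ℝ := fun x x' => ∑ y, Real.sqrt (W x y * W x' y) with hBdef
  have hB0 : ∀ x x', 0 ≤ B x x' := fun x x' =>
    Finset.sum_nonneg fun y _ => Real.sqrt_nonneg _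
  have hBd : ∀ x, B x x = 1 := by
    intro x
    rw [hBdef]
    calc ∑ y, Real.sqrt (W x y * W x y) = ∑ y, W x y :=
          Finset.sum_congr rfl fun y _ => Real.sqrt_mul_self (hW0 x y)
      _ = 1 := hW1 x
  have hnb : ∀ x x', ‖(inner ℂ (ψt x) (ψt x') : ℂ)‖ ≤ B x x' ^ (1/ρ) := by
    intro x x'
    by_cases hxx : x = x'
    · subst hxx
      rw [hBd, Real.one_rpow, inner_self_eq_norm_sq_to_K]
      simp [hψt x]
    · exact hrep x x' hxx
  set s : Fin M → ℂ := fun m => ∏ i, (inner ℂ (ψt (c m i)) f : ℂ) with hsdef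
  have hcomp : ∀ (m : Fin M) (g : X → ℝ), ∏ i, g (c m i) = ∏ a, g a ^ k a := by
    intro m g
    rw [← Finset.prod_fiberwise_of_maps_to (g := fun i => c m i)
      (fun i _ => Finset.mem_univ (c m i)) (fun i => g (c m i))]
    refine Finset.prod_congr rfl fun a _ => ?_
    calc ∏ i ∈ Finset.univ.filter (fun i => c m i = a), g (c m i)
        = ∏ i ∈ Finset.univ.filter (fun i => c m i = a), g a :=
          Finset.prod_congr rfl fun i hi => by rw [(Finset.mem_filter.mp hi).2]
      _ = g a ^ k a := by rw [Finset.prod_const, hc m a]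
  have hsnorm : ∀ m, Real.sqrt ε ≤ ‖s m‖ := by
    intro m
    have h1 : ‖s m‖ ^ 2 = ∏ a, ‖(inner ℂ (ψt a) f : ℂ)‖ ^ (2 * k a) := by
      rw [hsdef]
      simp only
      rw [norm_prod, ← Finset.prod_pow,
        hcomp m (fun a => ‖(inner ℂ (ψt a) f : ℂ)‖ ^ 2)]
      exact Finset.prod_congr rfl fun a _ => (pow_mul _ 2 (k a)).symm
    have h2 : ε ≤ ‖s m‖ ^ 2 := h1 ▸ hθ
    calc Real.sqrt ε ≤ Real.sqrt (‖s m‖ ^ 2) := Real.sqrt_le_sqrt h2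
      _ = ‖s m‖ := Real.sqrt_sq (norm_nonneg _)
  have hsε : (0:ℝ) < Real.sqrt ε := Real.sqrt_pos.mpr hε0
  have hspos : ∀ m, (0:ℝ) < ‖s m‖ := fun m => lt_of_lt_of_le hsε (hsnorm m)
  have hsne : ∀ m, ((‖s m‖ : ℝ) : ℂ) ≠ 0 := fun m =>
    Complex.ofReal_ne_zero.mpr (ne_of_gt (hspos m))
  set φ : Fin M → ℂ := fun m => s m / (‖s m‖ : ℂ) with hφdef
  have hφ1 : ∀ m, ‖φ m‖ = 1 := by
    intro m
    rw [hφdef]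
    simp only [norm_div, Complex.norm_real, Real.norm_eq_abs,
      abs_of_pos (hspos m)]
    exact div_self (ne_of_gt (hspos m))
  have hφs : ∀ m, (starRingEnd ℂ) (φ m) * s m = ((‖s m‖ : ℝ) : ℂ) := by
    intro m
    rw [hφdef]
    simp only [map_div₀, Complex.conj_ofReal]
    rw [div_mul_eq_mul_div, Complex.conj_mul', sq, mul_div_assoc,
      div_self (hsne m), mul_one]
  have hφs' : ∀ m, φ m * (starRingEnd ℂ) (s m) = ((‖s m‖ : ℝ) : ℂ) := by
    intro m
    have h := congrArg (starRingEnd ℂ) (hφs m)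
    rw [map_mul, Complex.conj_conj, Complex.conj_ofReal] at h
    exact h
  set c0 : ℝ := (M:ℝ) * Real.sqrt ε with hc0def
  have hc00 : 0 ≤ c0 := mul_nonneg (by positivity) hsε.le
  set u : Option (Fin M) → Fin n → E := fun j i =>
    (j.map fun m => ψt (c m i)).getD f with hudef
  set z : Option (Fin M) → ℂ := fun j => (j.map φ).getD (-(c0:ℂ)) with hzdef
  set F : Option (Fin M) → Option (Fin M) → ℂ := fun j k =>
    (starRingEnd ℂ) (z j) * z k * ∏ i, (inner ℂ (u j i) (u k i) : ℂ) with hFdef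
  have hpos : 0 ≤ (∑ j, ∑ k, F j k).re := gram_pos u z
  have hff : (inner ℂ f f : ℂ) = 1 := by
    rw [inner_self_eq_norm_sq_to_K, hf]; norm_num
  have h1 : (F none none).re = (M:ℝ)^2 * ε := by
    have hF : F none none = ((c0 ^ 2 : ℝ) : ℂ) := by
      rw [hFdef]
      simp only [hudef, hzdef, Option.map_none, Option.getD_none, hff,
        Finset.prod_const_one, mul_one, map_neg, Complex.conj_ofReal]
      push_cast; ring
    rw [hF, Complex.ofReal_re, hc0def, mul_pow, Real.sq_sqrt hε0.le]
  have hprod : ∀ m, (∏ i, (inner ℂ f (ψt (c m i)) : ℂ)) = (starRingEnd ℂ) (s m) := by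
    intro m
    simp only [hsdef, map_prod]
    exact Finset.prod_congr rfl fun i _ => (inner_conj_symm _ _).symm
  have h2 : ∀ m, (F none (some m)).re = -(c0 * ‖s m‖) := by
    intro m
    have hF : F none (some m) = -(((c0 * ‖s m‖ : ℝ) : ℂ)) := by
      rw [hFdef]
      simp only [hudef, hzdef, Option.map_none, Option.getD_none,
        Option.map_some, Option.getD_some, map_neg, Complex.conj_ofReal,
        hprod m]
      push_cast
      linear_combination (-(c0:ℂ)) * hφs' m
    rw [hF]
    simp
  have h3 : ∀ m, (F (some m) none).re = -(c0 * ‖s m‖) := by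
    intro m
    have hsprod : (∏ i, (inner ℂ (ψt (c m i)) f : ℂ)) = s m := by rw [hsdef]
    have hF : F (some m) none = -(((c0 * ‖s m‖ : ℝ) : ℂ)) := by
      rw [hFdef]
      simp only [hudef, hzdef, Option.map_none, Option.getD_none,
        Option.map_some, Option.getD_some, hsprod]
      push_cast
      linear_combination (-(c0:ℂ)) * hφs m
    rw [hF]
    simp
  have h4 : ∀ m, (F (some m) (some m)).re = 1 := by
    intro m
    have hdiag : (∏ i, (inner ℂ (ψt (c m i)) (ψt (c m i)) : ℂ)) = 1 := by
      rw [Finset.prod_congr rfl fun i _ =>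
        inner_self_eq_norm_sq_to_K (𝕜 := ℂ) (x := ψt (c m i))]
      simp [hψt]
    have hF : F (some m) (some m) = 1 := by
      rw [hFdef]
      simp only [hudef, hzdef, Option.map_some, Option.getD_some, hdiag, mul_one]
      rw [Complex.conj_mul', hφ1 m]
      norm_num
    rw [hF]
    simp
  have h5 : ∀ m m', m ≠ m' → (F (some m) (some m')).re < β := by
    intro m m' hmm
    have hre : (F (some m) (some m')).re ≤ ‖F (some m) (some m')‖ :=
      Complex.re_le_norm _
    have hnorm : ‖F (some m) (some m')‖
        = ∏ i, ‖(inner ℂ (ψt (c m i)) (ψt (c m' i)) : ℂ)‖ := by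
      rw [hFdef]
      simp only [hudef, hzdef, Option.map_some, Option.getD_some]
      rw [norm_mul, norm_mul, norm_prod, RCLike.norm_conj, hφ1, hφ1]
      ring
    have hchain : ∏ i, ‖(inner ℂ (ψt (c m i)) (ψt (c m' i)) : ℂ)‖ < β := by
      calc ∏ i, ‖(inner ℂ (ψt (c m i)) (ψt (c m' i)) : ℂ)‖
          ≤ ∏ i, (B (c m i) (c m' i)) ^ (1/ρ) :=
            Finset.prod_le_prod (fun i _ => norm_nonneg _) (fun i _ => hnb _ _)
        _ = (∏ i, B (c m i) (c m' i)) ^ (1/ρ) :=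
            Real.finset_prod_rpow _ _ (fun i _ => hB0 _ _) _
        _ < (β ^ ρ) ^ (1/ρ) :=
            Real.rpow_lt_rpow (Finset.prod_nonneg fun i _ => hB0 _ _)
              (hcon m m' hmm) (by positivity)
        _ = β := by
            rw [← Real.rpow_mul hβ0, mul_one_div_cancel hρne, Real.rpow_one]
    exact lt_of_le_of_lt (hre.trans (le_of_eq hnorm)) hchain
  -- assemble
  have hdecomp : (∑ j, ∑ k, F j k).re
      = (F none none).re + (∑ m, (F none (some m)).re)
        + ((∑ m, (F (some m) none).re) + ∑ m, ∑ m', (F (some m) (some m')).re) := by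
    rw [Fintype.sum_option (f := fun j => ∑ k, F j k)]
    rw [Fintype.sum_option (f := fun k => F none k)]
    rw [Finset.sum_congr rfl fun m _ => Fintype.sum_option (f := fun k => F (some m) k)]
    rw [Finset.sum_add_distrib]
    simp only [Complex.add_re, Complex.re_sum]

  have hS2 : (∑ m, (F none (some m)).re) ≤ -((M:ℝ)^2 * ε) := by
    have : ∀ m : Fin M, (F none (some m)).re ≤ -(c0 * Real.sqrt ε) := by
      intro m
      rw [h2 m]
      exact neg_le_neg (mul_le_mul_of_nonneg_left (hsnorm m) hc00)
    calc (∑ m, (F none (some m)).re) ≤ ∑ _m : Fin M, -(c0 * Real.sqrt ε) :=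
          Finset.sum_le_sum fun m _ => this m
      _ = (M:ℝ) * -(c0 * Real.sqrt ε) := by
          rw [Finset.sum_const, Finset.card_univ, Fintype.card_fin, nsmul_eq_mul]
      _ = -((M:ℝ)^2 * ε) := by
          rw [hc0def]
          have := Real.mul_self_sqrt hε0.le
          nlinarith [this]
  have hS3 : (∑ m, (F (some m) none).re) ≤ -((M:ℝ)^2 * ε) := by
    have : ∀ m : Fin M, (F (some m) none).re ≤ -(c0 * Real.sqrt ε) := by
      intro m
      rw [h3 m]
      exact neg_le_neg (mul_le_mul_of_nonneg_left (hsnorm m) hc00)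
    calc (∑ m, (F (some m) none).re) ≤ ∑ _m : Fin M, -(c0 * Real.sqrt ε) :=
          Finset.sum_le_sum fun m _ => this m
      _ = (M:ℝ) * -(c0 * Real.sqrt ε) := by
          rw [Finset.sum_const, Finset.card_univ, Fintype.card_fin, nsmul_eq_mul]
      _ = -((M:ℝ)^2 * ε) := by
          rw [hc0def]
          have := Real.mul_self_sqrt hε0.le
          nlinarith [this]
  have hS4 : (∑ m, ∑ m', (F (some m) (some m')).re)
      < (M:ℝ) * (1 + ((M:ℝ) - 1) * β) := by
    have hMpos : 0 < M := lt_of_lt_of_le (by norm_num) hM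
    have huniv : (Finset.univ : Finset (Fin M)).Nonempty :=
      ⟨⟨0, by omega⟩, Finset.mem_univ _⟩
    have hrow : ∀ m : Fin M, (∑ m', (F (some m) (some m')).re)
        < 1 + ((M:ℝ) - 1) * β := by
      intro m
      rw [← Finset.add_sum_erase Finset.univ
        (fun m' => (F (some m) (some m')).re) (Finset.mem_univ m), h4 m]
      have hcard : ((Finset.univ : Finset (Fin M)).erase m).card = M - 1 := by
        rw [Finset.card_erase_of_mem (Finset.mem_univ m), Finset.card_univ,
          Fintype.card_fin]
      have hne : ((Finset.univ : Finset (Fin M)).erase m).Nonempty := by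
        rw [← Finset.card_pos, hcard]
        omega
      have hlt : (∑ m' ∈ Finset.univ.erase m, (F (some m) (some m')).re)
          < ∑ _m' ∈ Finset.univ.erase m, β :=
        Finset.sum_lt_sum_of_nonempty hne fun m' hm' =>
          h5 m m' (Ne.symm (Finset.ne_of_mem_erase hm'))
      have hconst : (∑ _m' ∈ Finset.univ.erase m, β) = ((M:ℝ) - 1) * β := by
        rw [Finset.sum_const, hcard, nsmul_eq_mul,
          Nat.cast_sub (by omega : 1 ≤ M), Nat.cast_one]
      linarith [hlt, hconst.le, hconst.ge]
    calc (∑ m, ∑ m', (F (some m) (some m')).re)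
        < ∑ _m : Fin M, (1 + ((M:ℝ) - 1) * β) :=
          Finset.sum_lt_sum_of_nonempty huniv fun m _ => hrow m
      _ = (M:ℝ) * (1 + ((M:ℝ) - 1) * β) := by
          rw [Finset.sum_const, Finset.card_univ, Fintype.card_fin, nsmul_eq_mul]
  have hβeq : ((M:ℝ) - 1) * β = (M:ℝ) * ε - 1 := by
    rw [hβdef, mul_div_assoc']
    exact mul_div_cancel_left₀ _ (by linarith)
  have hfinal : (M:ℝ) * (1 + ((M:ℝ) - 1) * β) = (M:ℝ)^2 * ε := by
    rw [hβeq]; ring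
  linarith [hpos, hdecomp, h1, hS2, hS3, hS4, hfinal]
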